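/- Let F be a field of characteristic 0 and d ≥ 2. Let ζ = (ζ_{ij}^{(ℓ)} : 1 ≤ i, j ≤ d, ℓ ∈ ℕ) be commuting indeterminates, let Y_ℓ = (ζ_{ij}^{(ℓ)})_{1 ≤ i,j ≤ d} ∈ M_d(F[ζ]) be the generic matrices, and let GM_d(F) be the F-subalgebra of M_d(F[ζ]) generated by the Y_ℓ. For a = (a_ℓ)_{ℓ∈ℕ} ∈ M_d(F)^ℕ, let f ↦ f(a) denote the algebra homomorphism GM_d(F) → M_d(F) obtained by applying entrywise the F-algebra homomorphism F[ζ] → F sending ζ_{ij}^{(ℓ)} ↦ (a_ℓ)_{ij}. Then for every f ∈ GM_d(F) the following are equivalent: (i) f is a sum of commutators [g,h] = gh − hg of elements of GM_d(F); (ii) tr(f) = 0 in F[ζ]; (iii) tr(f(a)) = 0 for all a ∈ M_d(F)^ℕ; (iv) f(a) is a sum of commutators in M_d(F) for all a ∈ M_d(F)^ℕ. -/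

import Mathlib

namespace Stmt19Aux

open MvPolynomial Matrix

variable (F : Type*) [Field F] (d : ℕ)

noncomputable def Yg (ℓ : ℕ) : Matrix (Fin d) (Fin d) (MvPolynomial (ℕ × Fin d × Fin d) F) :=
  Matrix.of fun i j => X (ℓ, i, j)

noncomputable def pw (w : List ℕ) : Matrix (Fin d) (Fin d) (MvPolynomial (ℕ × Fin d × Fin d) F) :=
  (w.map (Yg F d)).prod

@[simp] lemma pw_nil : pw F d [] = 1 := rfl

@[simp] lemma pw_cons (a : ℕ) (w : List ℕ) : pw F d (a :: w) = Yg F d a * pw F d w := by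
  simp [pw]

lemma pw_append (u v : List ℕ) : pw F d (u ++ v) = pw F d u * pw F d v := by
  simp [pw]

lemma pw_singleton (a : ℕ) : pw F d [a] = Yg F d a := by simp

lemma pw_mem (w : List ℕ) : pw F d w ∈ Algebra.adjoin F (Set.range (Yg F d)) := by
  induction w with
  | nil => simpa using (Algebra.adjoin F (Set.range (Yg F d))).one_mem
  | cons a w ih =>
      rw [pw_cons]
      exact mul_mem (Algebra.subset_adjoin ⟨a, rfl⟩) ih

lemma exists_rep {f : Matrix (Fin d) (Fin d) (MvPolynomial (ℕ × Fin d × Fin d) F)}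
    (hf : f ∈ Algebra.adjoin F (Set.range (Yg F d))) :
    ∃ c : List ℕ →₀ F, (c.sum fun w a => a • pw F d w) = f := by
  rw [← Finsupp.mem_span_range_iff_exists_finsupp]
  have h1 : f ∈ Submodule.span F ((Submonoid.closure (Set.range (Yg F d)) :
      Submonoid (Matrix (Fin d) (Fin d) (MvPolynomial (ℕ × Fin d × Fin d) F))) : Set _) := by
    rw [← Algebra.adjoin_eq_span]; exact hf
  refine Submodule.span_le.2 ?_ h1
  intro x hx
  rw [SetLike.mem_coe] at hx
  have hx' : ∃ w : List ℕ, pw F d w = x := by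
    induction hx using Submonoid.closure_induction with
    | mem y hy =>
        obtain ⟨ℓ, rfl⟩ := hy
        exact ⟨[ℓ], pw_singleton F d ℓ⟩
    | one => exact ⟨[], rfl⟩
    | mul y z _ _ hy hz =>
        obtain ⟨u, rfl⟩ := hy
        obtain ⟨v, rfl⟩ := hz
        exact ⟨u ++ v, pw_append F d u v⟩
  exact Submodule.subset_span hx'

lemma pw_isHomogeneous (w : List ℕ) (i j : Fin d) :
    ((pw F d w) i j).IsHomogeneous w.length := by
  induction w generalizing i j with
  | nil =>
      by_cases h : i = j <;> simp [Matrix.one_apply, h, isHomogeneous_one, isHomogeneous_zero]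
  | cons a w ih =>
      rw [pw_cons, Matrix.mul_apply]
      refine MvPolynomial.IsHomogeneous.sum _ _ _ fun u _ => ?_
      have : (Yg F d a i u : MvPolynomial (ℕ × Fin d × Fin d) F) = X (a, i, u) := rfl
      rw [this]
      simpa [add_comm] using (isHomogeneous_X F (a, i, u)).mul (ih u j)


@[simp] lemma Yg_apply (ℓ : ℕ) (i j : Fin d) :
    Yg F d ℓ i j = X (ℓ, i, j) := rfl

lemma pderiv_X_triple (a n : ℕ) (s u i j : Fin d) :
    pderiv (n, i, j) (X (a, s, u) : MvPolynomial (ℕ × Fin d × Fin d) F) =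
      if a = n ∧ s = i ∧ u = j then 1 else 0 := by
  classical
  rw [pderiv_X]
  simp [Pi.single_apply, Prod.ext_iff, eq_comm]

lemma pderiv_pw (w : List ℕ) (n : ℕ) (i j s t : Fin d) :
    pderiv (n, i, j) ((pw F d w) s t) =
      ∑ p : Fin w.length, if w.get p = n then
        (pw F d (w.take ↑p)) s i * (pw F d (w.drop (↑p + 1))) j t else 0 := by
  classical
  induction w generalizing s t with
  | nil =>
      rcases eq_or_ne s t with h | h <;>
        simp [Matrix.one_apply, h, pderiv_one]
  | cons a w ih =>
      rw [pw_cons, Matrix.mul_apply, map_sum]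
      simp only [pderiv_mul, Yg_apply, pderiv_X_triple]
      rw [Finset.sum_add_distrib]
      simp only [List.length_cons]
      rw [Fin.sum_univ_succ]
      congr 1
      · -- first summand: ite-sum
        simp only [List.get_cons_zero, List.take_zero, List.drop_succ_cons, List.drop_zero,
          pw_nil, Matrix.one_apply]
        by_cases han : a = n
        · by_cases hsi : s = i
          · simp [han, hsi, Finset.sum_ite_eq']
          · simp [han, hsi, fun u => (show ¬(s = i ∧ u = j) from fun h => hsi h.1)]
        · simp [han]
      · -- second summand
        simp only [ih, Finset.mul_sum, mul_ite, mul_zero]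
        rw [Finset.sum_comm]
        refine Finset.sum_congr rfl fun p _ => ?_
        simp only [show ((a :: w).get p.succ) = w.get p from rfl, Fin.val_succ,
          List.take_succ_cons, List.drop_succ_cons, pw_cons, Matrix.mul_apply, Yg_apply]
        split_ifs with h
        · rw [Finset.sum_mul]
          exact Finset.sum_congr rfl fun u _ => (mul_assoc _ _ _).symm
        · simp

lemma pderiv_smul' (v : ℕ × Fin d × Fin d) (r : F) (p : MvPolynomial (ℕ × Fin d × Fin d) F) :
    pderiv v (r • p) = r • pderiv v p := by
  rw [smul_eq_C_mul, smul_eq_C_mul, pderiv_mul, pderiv_C, zero_mul, zero_add]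

noncomputable def Vset : Set (Matrix (Fin d) (Fin d) (MvPolynomial (ℕ × Fin d × Fin d) F)) :=
  {x | ∃ p q, p ∈ Algebra.adjoin F (Set.range (Yg F d)) ∧
    q ∈ Algebra.adjoin F (Set.range (Yg F d)) ∧ x = p * q - q * p}

lemma smul_mem_V (r : F) {x : Matrix (Fin d) (Fin d) (MvPolynomial (ℕ × Fin d × Fin d) F)}
    (hx : x ∈ AddSubgroup.closure (Vset F d)) :
    r • x ∈ AddSubgroup.closure (Vset F d) := by
  induction hx using AddSubgroup.closure_induction with
  | mem y hy =>
      obtain ⟨p, q, hp, hq, rfl⟩ := hy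
      refine AddSubgroup.subset_closure ⟨r • p, q, SMulMemClass.smul_mem r hp, hq, ?_⟩
      rw [smul_sub, smul_mul_assoc, mul_smul_comm]
  | zero => simpa using zero_mem _
  | add a b _ _ ha hb => simpa [smul_add] using add_mem ha hb
  | neg a _ ha => simpa [smul_neg] using neg_mem ha

lemma mem_V_of_trace_zero [CharZero F] (hd : d ≠ 0)
    {f : Matrix (Fin d) (Fin d) (MvPolynomial (ℕ × Fin d × Fin d) F)}
    (hf : f ∈ Algebra.adjoin F (Set.range (Yg F d))) (h0 : Matrix.trace f = 0) :
    f ∈ AddSubgroup.closure (Vset F d) := by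
  classical
  obtain ⟨c, rfl⟩ := exists_rep F d hf
  rw [Finsupp.sum] at h0 ⊢
  have key : ∀ (k : ℕ) (sk : Finset (List ℕ)), (∀ w ∈ sk, w.length = k) →
      Matrix.trace (∑ w ∈ sk, c w • pw F d w) = 0 →
      (∑ w ∈ sk, c w • pw F d w) ∈ AddSubgroup.closure (Vset F d) := by
    intro k sk hlen htr
    rcases Nat.eq_zero_or_pos k with rfl | hk
    · -- constant part
      have hw1 : ∀ w ∈ sk, pw F d w = 1 := fun w hw => by
        rw [List.length_eq_zero_iff.1 (hlen w hw), pw_nil]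
      have heq : (∑ w ∈ sk, c w • pw F d w) = (∑ w ∈ sk, c w) • (1 : Matrix (Fin d) (Fin d)
          (MvPolynomial (ℕ × Fin d × Fin d) F)) := by
        rw [Finset.sum_smul]
        exact Finset.sum_congr rfl fun w hw => by rw [hw1 w hw]
      rw [heq] at htr ⊢
      rw [Matrix.trace_smul, Matrix.trace_one, Fintype.card_fin, smul_eq_C_mul,
        ← map_natCast (C : F →+* MvPolynomial (ℕ × Fin d × Fin d) F) d, ← C_mul] at htr
      have hc0 : (∑ w ∈ sk, c w) = 0 := by
        rcases mul_eq_zero.1 (MvPolynomial.C_eq_zero.1 htr) with h | h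
        · exact h
        · exact absurd h (Nat.cast_ne_zero.2 hd)
      rw [hc0, zero_smul]
      exact zero_mem _
    · -- positive degree
      have hentry : ∀ (n : ℕ) (i j : Fin d),
          (∑ w ∈ sk, c w • ∑ p : Fin w.length,
            if w.get p = n then pw F d (w.drop (↑p + 1) ++ w.take ↑p) else 0) j i
          = pderiv (n, i, j) (Matrix.trace (∑ w ∈ sk, c w • pw F d w)) := by
        intro n i j
        rw [Matrix.trace_sum, map_sum, Matrix.sum_apply]
        refine Finset.sum_congr rfl fun w hw => ?_
        rw [Matrix.smul_apply, Matrix.sum_apply, Matrix.trace_smul, pderiv_smul' F d]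
        congr 1
        have htr' : Matrix.trace (pw F d w) = ∑ s, pw F d w s s := rfl
        rw [htr', map_sum]
        simp only [pderiv_pw]
        rw [Finset.sum_comm]
        refine Finset.sum_congr rfl fun p _ => ?_
        rw [Finset.sum_ite_irrel, Finset.sum_const_zero]
        by_cases hc : w.get p = n
        · rw [if_pos hc, if_pos hc, pw_append, Matrix.mul_apply]
          exact Finset.sum_congr rfl fun u _ => mul_comm _ _
        · rw [if_neg hc, if_neg hc, Matrix.zero_apply]
      have hG : ∀ n : ℕ, (∑ w ∈ sk, c w • ∑ p : Fin w.length,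
          if w.get p = n then pw F d (w.drop (↑p + 1) ++ w.take ↑p) else 0) = 0 := by
        intro n
        ext j i
        rw [hentry n i j, htr, map_zero, Matrix.zero_apply]
      set N' := sk.biUnion (fun w => w.toFinset) with hN'
      have h4 : (∑ w ∈ sk, c w • ∑ p : Fin w.length, pw F d (w.drop ↑p ++ w.take ↑p)) = 0 := by
        calc ∑ w ∈ sk, c w • ∑ p : Fin w.length, pw F d (w.drop ↑p ++ w.take ↑p)
            = ∑ w ∈ sk, c w • ∑ p : Fin w.length, ∑ n ∈ N',
                if w.get p = n then Yg F d n * pw F d (w.drop (↑p + 1) ++ w.take ↑p) else 0 := by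
              refine Finset.sum_congr rfl fun w hw => ?_
              congr 1
              refine Finset.sum_congr rfl fun p _ => ?_
              rw [Finset.sum_ite_eq, if_pos (Finset.mem_biUnion.2
                ⟨w, hw, List.mem_toFinset.2 (List.get_mem w _)⟩)]
              rw [← pw_cons, ← List.cons_append, List.get_eq_getElem, List.getElem_cons_drop]
          _ = ∑ n ∈ N', Yg F d n * (∑ w ∈ sk, c w • ∑ p : Fin w.length,
                if w.get p = n then pw F d (w.drop (↑p + 1) ++ w.take ↑p) else 0) := by
              simp only [Finset.mul_sum, mul_smul_comm, mul_ite, mul_zero]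
              rw [Finset.sum_comm]
              refine Finset.sum_congr rfl fun w hw => ?_
              rw [← Finset.smul_sum]
              congr 1
              exact Finset.sum_comm
          _ = 0 := Finset.sum_eq_zero fun n _ => by rw [hG n, mul_zero]
      have h5 : (∑ w ∈ sk, c w • ∑ p : Fin w.length,
          (pw F d (w.drop ↑p ++ w.take ↑p) - pw F d w)) ∈ AddSubgroup.closure (Vset F d) := by
        refine sum_mem fun w hw => smul_mem_V F d _ (sum_mem fun p _ => ?_)
        have hww : pw F d w = pw F d (w.take ↑p) * pw F d (w.drop ↑p) := by
          rw [← pw_append, List.take_append_drop]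
        refine AddSubgroup.subset_closure
          ⟨pw F d (w.drop ↑p), pw F d (w.take ↑p), pw_mem F d _, pw_mem F d _, ?_⟩
        rw [pw_append, hww]
      have h6 : ((k : F) • ∑ w ∈ sk, c w • pw F d w) ∈ AddSubgroup.closure (Vset F d) := by
        have heq : (∑ w ∈ sk, c w • ∑ p : Fin w.length,
            (pw F d (w.drop ↑p ++ w.take ↑p) - pw F d w))
            = - ((k : F) • ∑ w ∈ sk, c w • pw F d w) := by
          have hper : ∀ w ∈ sk, (∑ p : Fin w.length,
              (pw F d (w.drop ↑p ++ w.take ↑p) - pw F d w))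
              = (∑ p : Fin w.length, pw F d (w.drop ↑p ++ w.take ↑p)) - (k : F) • pw F d w := by
            intro w hw
            rw [Finset.sum_sub_distrib, Finset.sum_const, Finset.card_univ, Fintype.card_fin,
              hlen w hw, Nat.cast_smul_eq_nsmul]
          calc ∑ w ∈ sk, c w • ∑ p : Fin w.length,
                (pw F d (w.drop ↑p ++ w.take ↑p) - pw F d w)
              = (∑ w ∈ sk, c w • ∑ p : Fin w.length, pw F d (w.drop ↑p ++ w.take ↑p))
                - ∑ w ∈ sk, c w • (k : F) • pw F d w := by
                rw [← Finset.sum_sub_distrib]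
                exact Finset.sum_congr rfl fun w hw => by rw [hper w hw, smul_sub]
            _ = - ((k : F) • ∑ w ∈ sk, c w • pw F d w) := by
                rw [h4, zero_sub, Finset.smul_sum]
                congr 1
                exact Finset.sum_congr rfl fun w hw => smul_comm _ _ _
        rw [← neg_neg ((k : F) • ∑ w ∈ sk, c w • pw F d w), ← heq]
        exact neg_mem h5
      have h7 := smul_mem_V F d ((k : F)⁻¹) h6
      rwa [inv_smul_smul₀ (Nat.cast_ne_zero.2 hk.ne')] at h7
  set N : ℕ := c.support.sup List.length + 1 with hN
  have hdecomp : ∑ k ∈ Finset.range N, ∑ w ∈ c.support.filter (fun w => w.length = k),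
      c w • pw F d w = ∑ w ∈ c.support, c w • pw F d w :=
    Finset.sum_fiberwise_of_maps_to
      (fun w hw => Finset.mem_range.2 (Nat.lt_succ_of_le (Finset.le_sup hw))) _
  have hhom : ∀ k, (Matrix.trace (∑ w ∈ c.support.filter (fun w => w.length = k),
      c w • pw F d w)).IsHomogeneous k := by
    intro k
    rw [Matrix.trace_sum]
    refine MvPolynomial.IsHomogeneous.sum _ _ _ fun w hw => ?_
    rw [Matrix.trace_smul, MvPolynomial.smul_eq_C_mul]
    refine MvPolynomial.IsHomogeneous.C_mul ?_ _
    have htr' : Matrix.trace (pw F d w) = ∑ i, pw F d w i i := rfl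
    rw [htr']
    refine MvPolynomial.IsHomogeneous.sum _ _ _ fun i _ => ?_
    rw [← (Finset.mem_filter.1 hw).2]
    exact pw_isHomogeneous F d w i i
  have hzero : ∀ m, Matrix.trace (∑ w ∈ c.support.filter (fun w => w.length = m),
      c w • pw F d w) = 0 := by
    intro m
    by_cases hm : m ∈ Finset.range N
    · have hsum0 : ∑ k ∈ Finset.range N, Matrix.trace (∑ w ∈ c.support.filter
          (fun w => w.length = k), c w • pw F d w) = 0 := by
        rw [← Matrix.trace_sum, hdecomp, h0]
      have hcomp := congrArg (MvPolynomial.homogeneousComponent m) hsum0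
      rw [map_sum, map_zero] at hcomp
      rw [Finset.sum_congr rfl (fun k _ => MvPolynomial.homogeneousComponent_of_mem
        ((MvPolynomial.mem_homogeneousSubmodule _ _).2 (hhom k)))] at hcomp
      rw [Finset.sum_ite_eq] at hcomp
      rwa [if_pos hm] at hcomp
    · have hempty : c.support.filter (fun w => w.length = m) = ∅ := by
        refine Finset.filter_eq_empty_iff.2 fun w hw hl => ?_
        exact hm (Finset.mem_range.2 (hl ▸ Nat.lt_succ_of_le (Finset.le_sup hw)))
      simp [hempty]
  rw [← hdecomp]
  exact sum_mem fun k _ => key k _ (fun w hw => (Finset.mem_filter.1 hw).2) (hzero k)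

lemma trace_map' {R S : Type*} [CommSemiring R] [CommSemiring S] (φ : R →+* S)
    (M : Matrix (Fin d) (Fin d) R) : Matrix.trace (M.map φ) = φ (Matrix.trace M) := by
  simp [Matrix.trace, Matrix.diag, Matrix.map_apply]

end Stmt19Aux

/-- **Theorem 5.1 (tracial Nullstellensatz for generic matrices).** Let `F` be a field
of characteristic `0` and `d ≥ 2`.  With `F[ζ]` the polynomial algebra in the commuting
variables `ζᵢⱼ⁽ℓ⁾` (`1 ≤ i,j ≤ d`, `ℓ ∈ ℕ`), the generic matrices are
`Y ℓ = (ζᵢⱼ⁽ℓ⁾)ᵢⱼ ∈ M_d(F[ζ])` and `GM_d(F)` is the `F`-subalgebra they generate.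
Each `a ∈ M_d(F)^ℕ` induces the evaluation `f ↦ f(a)` by substituting `(a_ℓ)ᵢⱼ` for
`ζᵢⱼ⁽ℓ⁾` entrywise.  For `f ∈ GM_d(F)` the following are equivalent:
(i) `f` is a sum of commutators of elements of `GM_d(F)`;
(ii) `tr f = 0` in `F[ζ]`;
(iii) `tr (f(a)) = 0` for all `a`;
(iv) `f(a)` is a sum of commutators in `M_d(F)` for all `a`. -/
theorem stmt_19 (F : Type*) [Field F] [CharZero F] (d : ℕ) (hd : 2 ≤ d)
    (f : Matrix (Fin d) (Fin d) (MvPolynomial (ℕ × Fin d × Fin d) F))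
    (hf : f ∈ Algebra.adjoin F
      (Set.range fun ℓ : ℕ =>
        (Matrix.of fun i j : Fin d => (MvPolynomial.X (ℓ, i, j) :
          MvPolynomial (ℕ × Fin d × Fin d) F)))) :
    let GM : Subalgebra F (Matrix (Fin d) (Fin d) (MvPolynomial (ℕ × Fin d × Fin d) F)) :=
      Algebra.adjoin F
        (Set.range fun ℓ : ℕ =>
          (Matrix.of fun i j : Fin d => (MvPolynomial.X (ℓ, i, j) :
            MvPolynomial (ℕ × Fin d × Fin d) F)))
    let evalAt : (ℕ → Matrix (Fin d) (Fin d) F) →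
        Matrix (Fin d) (Fin d) (MvPolynomial (ℕ × Fin d × Fin d) F) →
        Matrix (Fin d) (Fin d) F := fun a g =>
      g.map (MvPolynomial.eval fun p => a p.1 p.2.1 p.2.2)
    List.TFAE
      [f ∈ AddSubgroup.closure
          {x : Matrix (Fin d) (Fin d) (MvPolynomial (ℕ × Fin d × Fin d) F) |
            ∃ p q, p ∈ GM ∧ q ∈ GM ∧ x = p * q - q * p},
       Matrix.trace f = 0,
       ∀ a : ℕ → Matrix (Fin d) (Fin d) F, Matrix.trace (evalAt a f) = 0,
       ∀ a : ℕ → Matrix (Fin d) (Fin d) F,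
         evalAt a f ∈ AddSubgroup.closure
           {x : Matrix (Fin d) (Fin d) F | ∃ p q, x = p * q - q * p}] := by
  intro GM evalAt
  tfae_have 2 → 1 := by
    intro h2
    exact Stmt19Aux.mem_V_of_trace_zero F d (by omega) hf h2
  tfae_have 1 → 4 := by
    intro h1 a
    have main : ∀ x ∈ AddSubgroup.closure
        {x : Matrix (Fin d) (Fin d) (MvPolynomial (ℕ × Fin d × Fin d) F) |
          ∃ p q, p ∈ GM ∧ q ∈ GM ∧ x = p * q - q * p},
        ((MvPolynomial.eval fun p : ℕ × Fin d × Fin d => a p.1 p.2.1 p.2.2).mapMatrix :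
            Matrix (Fin d) (Fin d) (MvPolynomial (ℕ × Fin d × Fin d) F) →+*
            Matrix (Fin d) (Fin d) F) x
          ∈ AddSubgroup.closure
            {x : Matrix (Fin d) (Fin d) F | ∃ p q, x = p * q - q * p} := by
      intro x hx
      induction hx using AddSubgroup.closure_induction with
      | mem y hy =>
          obtain ⟨p, q, hp, hq, rfl⟩ := hy
          exact AddSubgroup.subset_closure ⟨_, _, by rw [map_sub, map_mul, map_mul]⟩
      | zero => simpa using zero_mem _
      | add x y _ _ hx hy => rw [map_add]; exact add_mem hx hy
      | neg x _ hx => rw [map_neg]; exact neg_mem hx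
    exact main f h1
  tfae_have 4 → 3 := by
    intro h4 a
    have main : ∀ x ∈ AddSubgroup.closure
        {x : Matrix (Fin d) (Fin d) F | ∃ p q, x = p * q - q * p},
        Matrix.trace x = 0 := by
      intro x hx
      induction hx using AddSubgroup.closure_induction with
      | mem y hy =>
          obtain ⟨p, q, rfl⟩ := hy
          rw [Matrix.trace_sub, Matrix.trace_mul_comm, sub_self]
      | zero => simp
      | add x y _ _ hx hy => rw [Matrix.trace_add, hx, hy, add_zero]
      | neg x _ hx => rw [Matrix.trace_neg, hx, neg_zero]
    exact main _ (h4 a)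
  tfae_have 3 → 2 := by
    intro h3
    refine MvPolynomial.funext fun x => ?_
    rw [map_zero]
    have h : Matrix.trace (f.map (MvPolynomial.eval
        (fun p : ℕ × Fin d × Fin d => x (p.1, p.2.1, p.2.2)))) = 0 :=
      h3 (fun n i j => x (n, i, j))
    have hfun : (fun p : ℕ × Fin d × Fin d => x (p.1, p.2.1, p.2.2)) = x := rfl
    rw [hfun, Stmt19Aux.trace_map' d (MvPolynomial.eval x) f] at h
    exact h
  tfae_finish
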